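/- Gumbel-Max trick: if g(a) for a ∈ {1,…,k} are i.i.d. standard Gumbel random variables and ℓ : {1,…,k} → ℝ are fixed logits, then argmax_a (g(a) + ℓ(a)) is distributed according to the softmax distribution, i.e., P(argmax = a) = exp(ℓ(a)) / ∑_b exp(ℓ(b)). -/

import Mathlib

open MeasureTheory ProbabilityTheory Finset Real
open Set Filter Topology


lemma hda (S : ℝ) (hS : 0 < S) (y : ℝ) : HasDerivAt (fun y => -(exp (-S * exp y) / S))
    (exp y * exp (-S * exp y)) y := by
  have h1 : HasDerivAt (fun y : ℝ => -S * exp y) (-S * exp y) y :=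
    (Real.hasDerivAt_exp y).const_mul (-S)
  have h2 := (h1.exp.div_const S).neg
  refine h2.congr_deriv ?_
  field_simp

lemma tend_top (S : ℝ) (hS : 0 < S) :
    Tendsto (fun y => -(exp (-S * exp y) / S)) atTop (𝓝 0) := by
  have h1 : Tendsto (fun y : ℝ => -S * exp y) atTop atBot := by
    have := (tendsto_exp_atTop.const_mul_atTop hS)
    simpa using (tendsto_neg_atBot_iff.2 this)
  have h2 : Tendsto (fun y : ℝ => exp (-S * exp y)) atTop (𝓝 0) :=
    tendsto_exp_atBot.comp h1
  have := (h2.div_const S).neg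
  simpa using this

lemma int_Ioi (S : ℝ) (hS : 0 < S) (c : ℝ) :
    ∫ y in Ioi c, exp y * exp (-S * exp y) = exp (-S * exp c) / S := by
  have := integral_Ioi_of_hasDerivAt_of_nonneg' (g := fun y => -(exp (-S * exp y) / S))
    (g' := fun y => exp y * exp (-S * exp y)) (a := c)
    (fun x _ => hda S hS x) (fun x _ => by positivity) (tend_top S hS)
  rw [this]; ring

lemma intOn_Ioi (S : ℝ) (hS : 0 < S) (c : ℝ) :
    IntegrableOn (fun y => exp y * exp (-S * exp y)) (Ioi c) := by
  exact integrableOn_Ioi_deriv_of_nonneg' (fun x _ => hda S hS x) (fun x _ => by positivity)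
    (tend_top S hS)

lemma int_f (S : ℝ) (hS : 0 < S) :
    Integrable (fun y => exp y * exp (-S * exp y)) := by
  have h1 : IntegrableOn (fun y => exp y * exp (-S * exp y)) (Iic 0) := by
    refine Integrable.mono' (integrableOn_exp_Iic 0) ?_ ?_
    · exact ((by fun_prop : Continuous fun y : ℝ => exp y * exp (-S * exp y)).aestronglyMeasurable).restrict
    · filter_upwards with y
      have h : exp (-S * exp y) ≤ 1 := by
        rw [exp_le_one_iff]
        have : 0 < exp y := exp_pos y
        nlinarith
      have : 0 < exp y := exp_pos y
      rw [Real.norm_eq_abs, abs_of_nonneg (by positivity)]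
      nlinarith [exp_pos (-S * exp y)]
  have := h1.union (intOn_Ioi S hS 0)
  rwa [Iic_union_Ioi, integrableOn_univ] at this

lemma int_g (S : ℝ) (hS : 0 < S) :
    Integrable (fun x => exp (-x) * exp (-S * exp (-x))) := by
  have hemb : MeasurableEmbedding (fun x : ℝ => -x) :=
    (Homeomorph.neg ℝ).isClosedEmbedding.measurableEmbedding
  have := ((Measure.measurePreserving_neg (volume : Measure ℝ)).integrable_comp_emb hemb
    (g := fun y => exp y * exp (-S * exp y))).2 (int_f S hS)
  simpa [Function.comp_def] using this

lemma int_Iic (S : ℝ) (hS : 0 < S) (t : ℝ) :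
    ∫ x in Iic t, exp (-x) * exp (-S * exp (-x)) = exp (-S * exp (-t)) / S := by
  have := integral_comp_neg_Iic t (fun y => exp y * exp (-S * exp y))
  rw [this, int_Ioi S hS]

lemma int_line (S : ℝ) (hS : 0 < S) :
    ∫ x : ℝ, exp (-x) * exp (-S * exp (-x)) = 1 / S := by
  have hder : ∀ x : ℝ, HasDerivAt (fun x => exp (-S * exp (-x)) / S)
      (exp (-x) * exp (-S * exp (-x))) x := by
    intro x
    have h1 : HasDerivAt (fun x : ℝ => -x) (-1) x := (hasDerivAt_id x).neg
    have h2 : HasDerivAt (fun x : ℝ => exp (-x)) (-exp (-x)) x := by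
      simpa using h1.exp
    have h3 : HasDerivAt (fun x : ℝ => -S * exp (-x)) (S * exp (-x)) x := by
      have := h2.const_mul (-S); exact this.congr_deriv (by ring)
    have h4 := h3.exp.div_const S
    refine h4.congr_deriv ?_
    field_simp
  have hbot : Tendsto (fun x : ℝ => exp (-S * exp (-x)) / S) atBot (𝓝 0) := by
    have h1 : Tendsto (fun x : ℝ => exp (-x)) atBot atTop :=
      tendsto_exp_atTop.comp tendsto_neg_atBot_atTop
    have h2 : Tendsto (fun x : ℝ => -S * exp (-x)) atBot atBot := by
      have := h1.const_mul_atTop hS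
      simpa using tendsto_neg_atBot_iff.2 this
    have h3 := tendsto_exp_atBot.comp h2
    simpa using h3.div_const S
  have htop : Tendsto (fun x : ℝ => exp (-S * exp (-x)) / S) atTop (𝓝 (1 / S)) := by
    have h1 : Tendsto (fun x : ℝ => exp (-x)) atTop (𝓝 0) :=
      tendsto_exp_atBot.comp tendsto_neg_atTop_atBot
    have h2 : Tendsto (fun x : ℝ => -S * exp (-x)) atTop (𝓝 0) := by
      have := h1.const_mul (-S); simpa using this
    have h3 := (continuous_exp.tendsto 0).comp h2
    simp only [Real.exp_zero] at h3
    simpa using h3.div_const S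
  have := MeasureTheory.integral_of_hasDerivAt_of_tendsto hder (int_g S hS) hbot htop
  rw [this]; ring

noncomputable def gumbelM : Measure ℝ :=
  (volume : Measure ℝ).withDensity fun x => ENNReal.ofReal (exp (-x) * exp (-exp (-x)))

lemma int_g1 (S : ℝ) (hS : 0 < S) :
    Integrable (fun x => exp (-x) * exp (-S * exp (-x))) := int_g S hS

lemma gumbelM_apply {s : Set ℝ} (hs : MeasurableSet s) :
    gumbelM s = ENNReal.ofReal (∫ x in s, exp (-x) * exp (-exp (-x))) := by
  rw [gumbelM, withDensity_apply _ hs]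
  rw [← ofReal_integral_eq_lintegral_ofReal]
  · have := (int_g 1 one_pos).integrableOn (s := s)
    exact (by simpa using this : IntegrableOn _ s _)
  · filter_upwards with x; positivity

lemma gumbelM_Iic (t : ℝ) : gumbelM (Set.Iic t) = ENNReal.ofReal (exp (-exp (-t))) := by
  rw [gumbelM_apply measurableSet_Iic]
  have := int_Iic 1 one_pos t
  simp only [neg_one_mul] at this
  rw [this]; simp

lemma gumbelM_Iio (t : ℝ) : gumbelM (Set.Iio t) = ENNReal.ofReal (exp (-exp (-t))) := by
  rw [gumbelM_apply measurableSet_Iio, ← integral_Iic_eq_integral_Iio]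
  have := int_Iic 1 one_pos t
  simp only [neg_one_mul] at this
  rw [this]; simp

instance : IsProbabilityMeasure gumbelM := by
  constructor
  rw [gumbelM_apply MeasurableSet.univ]
  have := int_line 1 one_pos
  simp only [neg_one_mul] at this
  rw [MeasureTheory.setIntegral_univ, this]
  simp

/-- Gumbel-Max trick: if `g a`, `a : Fin k`, are i.i.d. standard Gumbel random
variables (CDF `exp (−exp (−x))`) and `ℓ` are fixed logits, then the probability
that `a` is the (almost surely unique) argmax of `g · + ℓ ·` equals the softmax
probability `exp (ℓ a) / ∑ b, exp (ℓ b)`. -/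
theorem stmt_8 {Ω : Type*} [MeasurableSpace Ω] (μ : Measure Ω) [IsProbabilityMeasure μ]
    (k : ℕ) (hk : 1 ≤ k) (g : Fin k → Ω → ℝ) (ℓ : Fin k → ℝ)
    (hmeas : ∀ a, Measurable (g a))
    (hindep : iIndepFun g μ)
    (hcdf : ∀ a x, μ {ω | g a ω ≤ x} = ENNReal.ofReal (exp (-exp (-x))))
    (a : Fin k) :
    μ {ω | ∀ b, b ≠ a → g b ω + ℓ b < g a ω + ℓ a} =
      ENNReal.ofReal (exp (ℓ a) / ∑ b, exp (ℓ b)) := by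
  -- each g b has law gumbelM
  have hν_map : ∀ b, μ.map (g b) = gumbelM := by
    intro b
    have : IsProbabilityMeasure (μ.map (g b)) := Measure.isProbabilityMeasure_map (hmeas b).aemeasurable
    refine Measure.ext_of_Iic _ _ (fun t => ?_)
    rw [Measure.map_apply (hmeas b) measurableSet_Iic, gumbelM_Iic]
    exact hcdf b t
  obtain ⟨n, rfl⟩ : ∃ n, k = n + 1 := ⟨k - 1, by omega⟩
  set m : Ω → (Fin (n + 1) → ℝ) := fun ω b => g b ω with hm
  have hm_meas : Measurable m := measurable_pi_lambda _ (fun b => hmeas b)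
  -- joint law is product
  have hpi : μ.map m = Measure.pi (fun _ : Fin (n + 1) => gumbelM) := by
    refine (Measure.pi_eq fun s hs => ?_).symm
    rw [Measure.map_apply hm_meas (MeasurableSet.univ_pi hs)]
    have hpre : m ⁻¹' (Set.pi Set.univ s) = ⋂ b ∈ Finset.univ, g b ⁻¹' s b := by
      ext ω; simp [m, Set.mem_pi]
    rw [hpre, (iIndepFun_iff_measure_inter_preimage_eq_mul.mp hindep) Finset.univ
      (fun b _ => hs b)]
    refine Finset.prod_congr rfl fun b _ => ?_
    rw [← Measure.map_apply (hmeas b) (hs b), hν_map b]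
  -- the argmax event as a set in the product space
  set A : Set (Fin (n + 1) → ℝ) := {y | ∀ b, b ≠ a → y b + ℓ b < y a + ℓ a} with hA
  have hA_meas : MeasurableSet A := by
    rw [hA, Set.setOf_forall]
    refine MeasurableSet.iInter fun b => ?_
    rcases eq_or_ne b a with rfl | hba
    · simp
    · simp only [hba, ne_eq, not_false_iff, true_implies]
      exact measurableSet_lt ((measurable_pi_apply b).add_const _)
        ((measurable_pi_apply a).add_const _)
  have hev : {ω | ∀ b, b ≠ a → g b ω + ℓ b < g a ω + ℓ a} = m ⁻¹' A := rfl
  rw [hev, ← Measure.map_apply hm_meas hA_meas, hpi]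
  -- split off coordinate a
  set π' : Measure (Fin n → ℝ) := Measure.pi (fun _ : Fin n => gumbelM) with hπ'
  set B : Set (ℝ × (Fin n → ℝ)) :=
    {p | ∀ j, p.2 j + ℓ (a.succAbove j) < p.1 + ℓ a} with hBdef
  have hB_meas : MeasurableSet B := by
    rw [hBdef, Set.setOf_forall]
    refine MeasurableSet.iInter fun j => ?_
    exact measurableSet_lt (((measurable_pi_apply j).comp measurable_snd).add_const _)
      (measurable_fst.add_const _)
  have hAB : A = (MeasurableEquiv.piFinSuccAbove (fun _ : Fin (n + 1) => ℝ) a) ⁻¹' B := by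
    ext y
    simp only [hA, hBdef, Set.mem_preimage, Set.mem_setOf_eq,
      MeasurableEquiv.piFinSuccAbove_apply, Fin.insertNthEquiv, Equiv.coe_fn_symm_mk]
    constructor
    · intro h j
      exact h (a.succAbove j) (Fin.succAbove_ne a j)
    · intro h b hb
      obtain ⟨j, rfl⟩ := Fin.exists_succAbove_eq hb
      exact h j
  have hmp := measurePreserving_piFinSuccAbove (fun _ : Fin (n + 1) => gumbelM) a
  rw [hAB, ← Measure.map_apply (MeasurableEquiv.piFinSuccAbove _ a).measurable hB_meas,
    hmp.map_eq]
  set T : ℝ := ∑ j : Fin n, exp (ℓ (a.succAbove j) - ℓ a) with hTdef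
  have hT : 0 ≤ T := Finset.sum_nonneg fun j _ => (exp_pos _).le
  have hS : (0:ℝ) < 1 + T := by linarith
  have hsec : ∀ x : ℝ, Prod.mk x ⁻¹' B =
      Set.pi Set.univ (fun j => Set.Iio (x + ℓ a - ℓ (a.succAbove j))) := by
    intro x; ext y
    simp [hBdef, lt_sub_iff_add_lt, Set.mem_pi]
  rw [Measure.prod_apply hB_meas]
  calc ∫⁻ x, π' (Prod.mk x ⁻¹' B) ∂gumbelM
      = ∫⁻ x, ENNReal.ofReal (exp (-(exp (-x) * T))) ∂gumbelM := by
        refine lintegral_congr fun x => ?_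
        rw [hsec x, hπ', Measure.pi_pi]
        rw [Finset.prod_congr rfl (fun j _ => gumbelM_Iio (x + ℓ a - ℓ (a.succAbove j))),
          ← ENNReal.ofReal_prod_of_nonneg (fun j _ => (exp_pos _).le)]
        congr 1
        rw [← Real.exp_sum]
        congr 1
        have he : ∀ j : Fin n, -exp (-(x + ℓ a - ℓ (a.succAbove j))) =
            -(exp (-x) * exp (ℓ (a.succAbove j) - ℓ a)) := by
          intro j; rw [← Real.exp_add]; ring_nf
        rw [Finset.sum_congr rfl (fun j _ => he j), Finset.sum_neg_distrib, ← Finset.mul_sum]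
    _ = ∫⁻ x, ENNReal.ofReal (exp (-x) * exp (-exp (-x))) *
          ENNReal.ofReal (exp (-(exp (-x) * T))) ∂volume := by
        rw [gumbelM, lintegral_withDensity_eq_lintegral_mul volume
          (by fun_prop) (by fun_prop)]
        rfl
    _ = ∫⁻ x, ENNReal.ofReal (exp (-x) * exp (-(1 + T) * exp (-x))) ∂volume := by
        refine lintegral_congr fun x => ?_
        rw [← ENNReal.ofReal_mul (by positivity)]
        congr 1
        rw [mul_assoc, ← Real.exp_add]
        ring_nf
    _ = ENNReal.ofReal (∫ x, exp (-x) * exp (-(1 + T) * exp (-x))) :=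
        (ofReal_integral_eq_lintegral_ofReal (int_g (1 + T) hS)
          (Filter.Eventually.of_forall fun x => by positivity)).symm
    _ = ENNReal.ofReal (1 / (1 + T)) := by rw [int_line (1 + T) hS]
    _ = ENNReal.ofReal (exp (ℓ a) / ∑ b, exp (ℓ b)) := by
        congr 1
        rw [Fin.sum_univ_succAbove (fun b => exp (ℓ b)) a]
        have hTv : T = (∑ j : Fin n, exp (ℓ (a.succAbove j))) / exp (ℓ a) := by
          rw [hTdef]
          simp_rw [Real.exp_sub]
          rw [← Finset.sum_div]
        rw [hTv]
        have h1 : (0:ℝ) < exp (ℓ a) := exp_pos _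
        have h2 : (0:ℝ) < exp (ℓ a) + ∑ j : Fin n, exp (ℓ (a.succAbove j)) := by
          have : (0:ℝ) ≤ ∑ j : Fin n, exp (ℓ (a.succAbove j)) :=
            Finset.sum_nonneg fun j _ => (exp_pos _).le
          linarith
        field_simp
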